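/- Let ρ be a nonnegative real-valued function on objects of a triangulated category C satisfying translation invariance ρ(ΣX) = ρ(X), additivity ρ(X ⊕ Y) = ρ(X) + ρ(Y), and the triangle inequality ρ(Y) ≤ ρ(X) + ρ(Z) for every exact triangle X → Y → Z. Then the function on morphisms defined by ρ(f : X → Y) := (ρ(X) + ρ(Y) − ρ(cone f))/2 is nonnegative, and for every exact triangle X →f Y →g Z one has ρ(f) + ρ(g) = ρ(id_Y) = ρ(Y). -/

import Mathlib

open CategoryTheory CategoryTheory.Limits CategoryTheory.Pretriangulated

variable {C : Type*} [Category C] [Preadditive C] [HasZeroObject C]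
  [HasShift C ℤ] [∀ n : ℤ, (CategoryTheory.shiftFunctor C n).Additive] [Pretriangulated C]
  [HasBinaryBiproducts C]

/-- From a rank function on objects one gets a nonnegative function on
morphisms via ρ(f) = (ρ X + ρ Y - ρ (cone f))/2, satisfying rank-nullity on exact
triangles.  For a distinguished triangle (X,Y,Z,f,g,h), cone f = Z and cone g ≅ ΣX. -/
theorem rank_function_on_morphisms_from_objects (ρ : C → ℝ)
    (hnonneg : ∀ X : C, 0 ≤ ρ X)
    (hshift : ∀ X : C, ρ (X⟦(1 : ℤ)⟧) = ρ X)
    (hadd : ∀ X Y : C, ρ (X ⊞ Y) = ρ X + ρ Y)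
    (htriangle : ∀ T ∈ distTriang C, ρ T.obj₂ ≤ ρ T.obj₁ + ρ T.obj₃) :
    ∀ T ∈ distTriang C,
      0 ≤ (ρ T.obj₁ + ρ T.obj₂ - ρ T.obj₃) / 2 ∧
      (ρ T.obj₁ + ρ T.obj₂ - ρ T.obj₃) / 2
        + (ρ T.obj₂ + ρ T.obj₃ - ρ (T.obj₁⟦(1 : ℤ)⟧)) / 2 = ρ T.obj₂ := by
  intro T hT
  have hrot := htriangle T.rotate (rot_of_distTriang T hT)
  dsimp [Triangle.rotate] at hrot
  change ρ T.obj₃ ≤ ρ T.obj₂ + ρ (T.obj₁⟦(1 : ℤ)⟧) at hrot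
  rw [hshift] at hrot
  rw [hshift T.obj₁]
  constructor
  · linarith
  · ring
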